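/- The infinite-data CFQE iterates are valid lower bounds on the true Q-function with quantified worst-case error: for every h ∈ {1,…,H} and all (s,a), 0 ≤ Q_h(s,a) − f̂_h(s,a) ≤ (H−h) − Σ_{i=1}^{H−h} (α_min/β_max)^i. In particular, if α(s,a) = 1/(1+ε) and β(s,a) = 1+ε for some ε > 0, then for every state s: 0 ≤ V_1(s) − Σ_a π_e(a|s) f̂_1(s,a) ≤ 2εH². -/
import Mathlib


open Finset

noncomputable section

variable {S U A : Type*}

/-- Marginalized (observed) behavior policy `π_b(a|s) = Σ_u P(u|s) π_b(a|s,u)`. -/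
def piMarg [Fintype U] (Pu : S → U → ℝ) (pib : S → U → A → ℝ) (s : S) (a : A) : ℝ :=
  ∑ u, Pu s u * pib s u a

/-- Marginalized transition kernel `P(s'|s,a) = Σ_u P(u|s) T(s'|s,u,a)`. -/
def margKer [Fintype U] (Pu : S → U → ℝ) (T : S → U → A → S → ℝ)
    (s : S) (a : A) (s' : S) : ℝ :=
  ∑ u, Pu s u * T s u a s'

/-- Confounded observed kernel `P^b(s'|s,a) = Σ_u P(u|s)·(π_b(a|s,u)/π_b(a|s))·T(s'|s,u,a)`. -/
def confKer [Fintype U] (Pu : S → U → ℝ) (pib : S → U → A → ℝ) (T : S → U → A → S → ℝ)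
    (s : S) (a : A) (s' : S) : ℝ :=
  ∑ u, Pu s u * (pib s u a / piMarg Pu pib s a) * T s u a s'

/-- Bellman value of the evaluation policy under kernel `P`, indexed by the number of
remaining steps: `Vaux P r πe k = V_{H+1-k}` (so `Vaux _ _ _ 0 = V_{H+1} = 0`). -/
def Vaux [Fintype S] [Fintype A] (P : S → A → S → ℝ) (r : S → A → ℝ) (pie : S → A → ℝ) :
    ℕ → S → ℝ
  | 0 => fun _ => 0
  | (k + 1) => fun s => ∑ a, pie s a * (r s a + ∑ s', P s a s' * Vaux P r pie k s')

/-- Bellman Q-value with `k` remaining steps *after* the current one: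
`Qaux P r πe k = Q_{H-k}`, i.e. `Q_h(s,a) = r(s,a) + Σ_{s'} P(s'|s,a) V_{h+1}(s')`. -/
def Qaux [Fintype S] [Fintype A] (P : S → A → S → ℝ) (r : S → A → ℝ) (pie : S → A → ℝ)
    (k : ℕ) (s : S) (a : A) : ℝ :=
  r s a + ∑ s', P s a s' * Vaux P r pie k s'

/-- Infinite-data FQE iterates indexed by remaining steps: `fqeAux Pb r πe k = f̂_{H+1-k}`,
so `f̂_{H+1} = 0` and `f̂_h(s,a) = r(s,a) + Σ_{s'} P^b(s'|s,a) Σ_{a'} π_e(a'|s') f̂_{h+1}(s',a')`. -/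
def fqeAux [Fintype S] [Fintype A] (Pb : S → A → S → ℝ) (r : S → A → ℝ) (pie : S → A → ℝ) :
    ℕ → S → A → ℝ
  | 0 => fun _ _ => 0
  | (k + 1) => fun s a => r s a + ∑ s', Pb s a s' * ∑ a', pie s' a' * fqeAux Pb r pie k s' a'

/-- CFQE uncertainty set `B̃_{sa}`: functions `g : S → ℝ` with
`α(s,a) ≤ π_b(a|s)·g(s') ≤ β(s,a)` for all `s'` and
`Σ_{s'} π_b(a|s)·g(s')·P^b(s'|s,a) = 1`. -/
def Bset [Fintype S] [Fintype U] [Fintype A] (Pu : S → U → ℝ) (pib : S → U → A → ℝ)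
    (T : S → U → A → S → ℝ) (α β : S → A → ℝ) (s : S) (a : A) : Set (S → ℝ) :=
  {g | (∀ s', α s a ≤ piMarg Pu pib s a * g s' ∧ piMarg Pu pib s a * g s' ≤ β s a) ∧
    ∑ s', piMarg Pu pib s a * g s' * confKer Pu pib T s a s' = 1}

/-- Infinite-data CFQE iterates indexed by remaining steps: `cfqeAux ... k = f̂_{H+1-k}`,
so `f̂_{H+1} = 0` and
`f̂_h(s,a) = inf_{g ∈ B̃_{sa}} Σ_{s'} P^b(s'|s,a)·π_b(a|s)·g(s')·(r(s,a) + Σ_{a'} π_e(a'|s') f̂_{h+1}(s',a'))`. -/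
def cfqeAux [Fintype S] [Fintype U] [Fintype A] (Pu : S → U → ℝ) (pib : S → U → A → ℝ)
    (T : S → U → A → S → ℝ) (α β : S → A → ℝ) (r : S → A → ℝ) (pie : S → A → ℝ) :
    ℕ → S → A → ℝ
  | 0 => fun _ _ => 0
  | (k + 1) => fun s a =>
      sInf ((fun g : S → ℝ =>
        ∑ s', confKer Pu pib T s a s' * (piMarg Pu pib s a * g s') *
          (r s a + ∑ a', pie s' a' * cfqeAux Pu pib T α β r pie k s' a')) ''
        Bset Pu pib T α β s a)

section CFQEAux
set_option linter.unusedSectionVars false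

variable [Fintype S] [Fintype U] [Fintype A] [Nonempty S] [Nonempty U] [Nonempty A]

lemma piMarg_pos {Pu : S → U → ℝ} {pib : S → U → A → ℝ}
    (hPu0 : ∀ s u, 0 ≤ Pu s u) (hPu1 : ∀ s, ∑ u, Pu s u = 1)
    (hpib0 : ∀ s u a, 0 < pib s u a) (s : S) (a : A) :
    0 < piMarg Pu pib s a := by
  obtain ⟨u, hu⟩ : ∃ u, 0 < Pu s u := by
    by_contra hcon
    push_neg at hcon
    have h := Finset.sum_nonpos (fun u (_ : u ∈ Finset.univ) => hcon u)
    rw [hPu1] at h; linarith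
  have h1 : 0 < Pu s u * pib s u a := mul_pos hu (hpib0 s u a)
  have h2 : Pu s u * pib s u a ≤ piMarg Pu pib s a :=
    Finset.single_le_sum (fun v _ => mul_nonneg (hPu0 s v) (hpib0 s v a).le)
      (Finset.mem_univ u)
  linarith

lemma confKer_nonneg {Pu : S → U → ℝ} {pib : S → U → A → ℝ} {T : S → U → A → S → ℝ}
    (hPu0 : ∀ s u, 0 ≤ Pu s u) (hPu1 : ∀ s, ∑ u, Pu s u = 1)
    (hT0 : ∀ s u a s', 0 ≤ T s u a s')
    (hpib0 : ∀ s u a, 0 < pib s u a) (s : S) (a : A) (s' : S) :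
    0 ≤ confKer Pu pib T s a s' := by
  apply Finset.sum_nonneg
  intro u _
  have hm := piMarg_pos hPu0 hPu1 hpib0 s a
  exact mul_nonneg (mul_nonneg (hPu0 s u) (div_nonneg (hpib0 s u a).le hm.le)) (hT0 s u a s')

lemma confKer_sum {Pu : S → U → ℝ} {pib : S → U → A → ℝ} {T : S → U → A → S → ℝ}
    (hPu0 : ∀ s u, 0 ≤ Pu s u) (hPu1 : ∀ s, ∑ u, Pu s u = 1)
    (hT1 : ∀ s u a, ∑ s', T s u a s' = 1)
    (hpib0 : ∀ s u a, 0 < pib s u a) (s : S) (a : A) :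
    ∑ s', confKer Pu pib T s a s' = 1 := by
  have hm := piMarg_pos hPu0 hPu1 hpib0 s a
  unfold confKer
  rw [Finset.sum_comm]
  have h : ∀ u, ∑ s', Pu s u * (pib s u a / piMarg Pu pib s a) * T s u a s'
      = Pu s u * pib s u a / piMarg Pu pib s a := by
    intro u
    rw [← Finset.mul_sum, hT1]
    ring
  rw [Finset.sum_congr rfl (fun u _ => h u), ← Finset.sum_div]
  rw [show ∑ u, Pu s u * pib s u a = piMarg Pu pib s a from rfl]
  field_simp

lemma margKer_nonneg {Pu : S → U → ℝ} {T : S → U → A → S → ℝ}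
    (hPu0 : ∀ s u, 0 ≤ Pu s u) (hT0 : ∀ s u a s', 0 ≤ T s u a s')
    (s : S) (a : A) (s' : S) : 0 ≤ margKer Pu T s a s' :=
  Finset.sum_nonneg fun u _ => mul_nonneg (hPu0 s u) (hT0 s u a s')

lemma margKer_sum {Pu : S → U → ℝ} {T : S → U → A → S → ℝ}
    (hPu1 : ∀ s, ∑ u, Pu s u = 1) (hT1 : ∀ s u a, ∑ s', T s u a s' = 1)
    (s : S) (a : A) : ∑ s', margKer Pu T s a s' = 1 := by
  unfold margKer
  rw [Finset.sum_comm]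
  have h : ∀ u, ∑ s', Pu s u * T s u a s' = Pu s u := by
    intro u; rw [← Finset.mul_sum, hT1, mul_one]
  rw [Finset.sum_congr rfl (fun u _ => h u), hPu1]

end CFQEAux

section CFQEAux2
set_option linter.unusedSectionVars false

variable [Fintype S] [Fintype U] [Fintype A] [Nonempty S] [Nonempty U] [Nonempty A]
variable {Pu : S → U → ℝ} {pib : S → U → A → ℝ} {T : S → U → A → S → ℝ}
  {r : S → A → ℝ} {pie : S → A → ℝ} {α β : S → A → ℝ}

lemma alpha_le_beta
    (hsens : ∀ s u a, α s a ≤ piMarg Pu pib s a / pib s u a ∧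
      piMarg Pu pib s a / pib s u a ≤ β s a) (s : S) (a : A) :
    α s a ≤ β s a := by
  obtain ⟨u⟩ := ‹Nonempty U›
  exact le_trans (hsens s u a).1 (hsens s u a).2

lemma marg_sandwich
    (hPu0 : ∀ s u, 0 ≤ Pu s u) (hPu1 : ∀ s, ∑ u, Pu s u = 1)
    (hT0 : ∀ s u a s', 0 ≤ T s u a s')
    (hpib0 : ∀ s u a, 0 < pib s u a)
    (hsens : ∀ s u a, α s a ≤ piMarg Pu pib s a / pib s u a ∧
      piMarg Pu pib s a / pib s u a ≤ β s a) (s : S) (a : A) (s' : S) :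
    α s a * confKer Pu pib T s a s' ≤ margKer Pu T s a s' ∧
      margKer Pu T s a s' ≤ β s a * confKer Pu pib T s a s' := by
  have hm := piMarg_pos hPu0 hPu1 hpib0 s a
  have key : ∀ u, α s a * (pib s u a / piMarg Pu pib s a) ≤ 1 ∧
      1 ≤ β s a * (pib s u a / piMarg Pu pib s a) := by
    intro u
    have hp := hpib0 s u a
    obtain ⟨h1, h2⟩ := hsens s u a
    have h1' : α s a * pib s u a ≤ piMarg Pu pib s a := (le_div_iff₀ hp).mp h1
    have h2' : piMarg Pu pib s a ≤ β s a * pib s u a := (div_le_iff₀ hp).mp h2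
    constructor
    · rw [← mul_div_assoc, div_le_one hm]; exact h1'
    · rw [← mul_div_assoc, le_div_iff₀ hm]; linarith
  constructor
  · unfold margKer confKer
    rw [Finset.mul_sum]
    apply Finset.sum_le_sum
    intro u _
    have hb : 0 ≤ Pu s u * T s u a s' := mul_nonneg (hPu0 s u) (hT0 s u a s')
    have h3 := mul_le_mul_of_nonneg_right (key u).1 hb
    calc α s a * (Pu s u * (pib s u a / piMarg Pu pib s a) * T s u a s')
        = α s a * (pib s u a / piMarg Pu pib s a) * (Pu s u * T s u a s') := by ring
      _ ≤ 1 * (Pu s u * T s u a s') := h3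
      _ = Pu s u * T s u a s' := by ring
  · unfold margKer confKer
    rw [Finset.mul_sum]
    apply Finset.sum_le_sum
    intro u _
    have hb : 0 ≤ Pu s u * T s u a s' := mul_nonneg (hPu0 s u) (hT0 s u a s')
    have h3 := mul_le_mul_of_nonneg_right (key u).2 hb
    calc Pu s u * T s u a s' = 1 * (Pu s u * T s u a s') := by ring
      _ ≤ β s a * (pib s u a / piMarg Pu pib s a) * (Pu s u * T s u a s') := h3
      _ = β s a * (Pu s u * (pib s u a / piMarg Pu pib s a) * T s u a s') := by ring

lemma Vaux_bounds
    (hPu0 : ∀ s u, 0 ≤ Pu s u) (hPu1 : ∀ s, ∑ u, Pu s u = 1)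
    (hT0 : ∀ s u a s', 0 ≤ T s u a s') (hT1 : ∀ s u a, ∑ s', T s u a s' = 1)
    (hr0 : ∀ s a, 0 ≤ r s a) (hr1 : ∀ s a, r s a ≤ 1)
    (hpie0 : ∀ s a, 0 ≤ pie s a) (hpie1 : ∀ s, ∑ a, pie s a = 1) :
    ∀ k s, 0 ≤ Vaux (margKer Pu T) r pie k s ∧ Vaux (margKer Pu T) r pie k s ≤ (k : ℝ) := by
  intro k
  induction k with
  | zero => intro s; simp [Vaux]
  | succ n ih =>
    intro s
    have hterm : ∀ a, 0 ≤ r s a + ∑ s', margKer Pu T s a s' * Vaux (margKer Pu T) r pie n s' ∧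
        r s a + ∑ s', margKer Pu T s a s' * Vaux (margKer Pu T) r pie n s' ≤ (n : ℝ) + 1 := by
      intro a
      have h0 : 0 ≤ ∑ s', margKer Pu T s a s' * Vaux (margKer Pu T) r pie n s' :=
        Finset.sum_nonneg fun s' _ => mul_nonneg (margKer_nonneg hPu0 hT0 s a s') (ih s').1
      have h1 : ∑ s', margKer Pu T s a s' * Vaux (margKer Pu T) r pie n s' ≤ (n : ℝ) := by
        calc ∑ s', margKer Pu T s a s' * Vaux (margKer Pu T) r pie n s'
            ≤ ∑ s', margKer Pu T s a s' * (n : ℝ) :=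
              Finset.sum_le_sum fun s' _ =>
                mul_le_mul_of_nonneg_left (ih s').2 (margKer_nonneg hPu0 hT0 s a s')
          _ = (n : ℝ) := by rw [← Finset.sum_mul, margKer_sum hPu1 hT1, one_mul]
      exact ⟨by have := hr0 s a; linarith, by have := hr1 s a; linarith⟩
    constructor
    · exact Finset.sum_nonneg fun a _ => mul_nonneg (hpie0 s a) (hterm a).1
    · calc ∑ a, pie s a * (r s a + ∑ s', margKer Pu T s a s' * Vaux (margKer Pu T) r pie n s')
          ≤ ∑ a, pie s a * ((n : ℝ) + 1) :=
            Finset.sum_le_sum fun a _ => mul_le_mul_of_nonneg_left (hterm a).2 (hpie0 s a)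
        _ = (n : ℝ) + 1 := by rw [← Finset.sum_mul, hpie1, one_mul]
        _ = ((n + 1 : ℕ) : ℝ) := by push_cast; ring

lemma Qaux_bounds
    (hPu0 : ∀ s u, 0 ≤ Pu s u) (hPu1 : ∀ s, ∑ u, Pu s u = 1)
    (hT0 : ∀ s u a s', 0 ≤ T s u a s') (hT1 : ∀ s u a, ∑ s', T s u a s' = 1)
    (hr0 : ∀ s a, 0 ≤ r s a) (hr1 : ∀ s a, r s a ≤ 1)
    (hpie0 : ∀ s a, 0 ≤ pie s a) (hpie1 : ∀ s, ∑ a, pie s a = 1)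
    (k : ℕ) (s : S) (a : A) :
    0 ≤ Qaux (margKer Pu T) r pie k s a ∧ Qaux (margKer Pu T) r pie k s a ≤ (k : ℝ) + 1 := by
  unfold Qaux
  have h0 : 0 ≤ ∑ s', margKer Pu T s a s' * Vaux (margKer Pu T) r pie k s' :=
    Finset.sum_nonneg fun s' _ => mul_nonneg (margKer_nonneg hPu0 hT0 s a s')
      (Vaux_bounds hPu0 hPu1 hT0 hT1 hr0 hr1 hpie0 hpie1 k s').1
  have h1 : ∑ s', margKer Pu T s a s' * Vaux (margKer Pu T) r pie k s' ≤ (k : ℝ) := by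
    calc ∑ s', margKer Pu T s a s' * Vaux (margKer Pu T) r pie k s'
        ≤ ∑ s', margKer Pu T s a s' * (k : ℝ) :=
          Finset.sum_le_sum fun s' _ => mul_le_mul_of_nonneg_left
            (Vaux_bounds hPu0 hPu1 hT0 hT1 hr0 hr1 hpie0 hpie1 k s').2
            (margKer_nonneg hPu0 hT0 s a s')
      _ = (k : ℝ) := by rw [← Finset.sum_mul, margKer_sum hPu1 hT1, one_mul]
  exact ⟨by have := hr0 s a; linarith, by have := hr1 s a; linarith⟩

lemma Vaux_succ (P : S → A → S → ℝ) (k : ℕ) (s : S) :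
    Vaux P r pie (k + 1) s = ∑ a, pie s a * Qaux P r pie k s a := by
  simp [Vaux, Qaux]

end CFQEAux2

section CFQEAux3
set_option linter.unusedSectionVars false

variable [Fintype S] [Fintype U] [Fintype A] [Nonempty S] [Nonempty U] [Nonempty A]
variable {Pu : S → U → ℝ} {pib : S → U → A → ℝ} {T : S → U → A → S → ℝ}
  {r : S → A → ℝ} {pie : S → A → ℝ} {α β : S → A → ℝ}

/-- The "oracle" element of the uncertainty set realizing the true marginal kernel. -/
lemma Bset_witness
    (hPu0 : ∀ s u, 0 ≤ Pu s u) (hPu1 : ∀ s, ∑ u, Pu s u = 1)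
    (hT0 : ∀ s u a s', 0 ≤ T s u a s') (hT1 : ∀ s u a, ∑ s', T s u a s' = 1)
    (hpib0 : ∀ s u a, 0 < pib s u a)
    (hsens : ∀ s u a, α s a ≤ piMarg Pu pib s a / pib s u a ∧
      piMarg Pu pib s a / pib s u a ≤ β s a) (s : S) (a : A) :
    ∃ g ∈ Bset Pu pib T α β s a,
      ∀ s', confKer Pu pib T s a s' * (piMarg Pu pib s a * g s') = margKer Pu T s a s' := by
  have hm := piMarg_pos hPu0 hPu1 hpib0 s a
  set w : S → ℝ := fun s' =>
    if confKer Pu pib T s a s' = 0 then α s a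
    else margKer Pu T s a s' / confKer Pu pib T s a s' with hw
  refine ⟨fun s' => w s' / piMarg Pu pib s a, ?_, ?_⟩
  · have hpmw : ∀ s', piMarg Pu pib s a * (w s' / piMarg Pu pib s a) = w s' := by
      intro s'; field_simp
    constructor
    · intro s'
      rw [hpmw]
      by_cases hc : confKer Pu pib T s a s' = 0
      · simp only [hw, hc, if_true]
        exact ⟨le_refl _, alpha_le_beta hsens s a⟩
      · have hcpos : 0 < confKer Pu pib T s a s' :=
          lt_of_le_of_ne (confKer_nonneg hPu0 hPu1 hT0 hpib0 s a s') (Ne.symm hc)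
        obtain ⟨h1, h2⟩ := marg_sandwich hPu0 hPu1 hT0 hpib0 hsens s a s'
        simp only [hw, hc, if_false]
        exact ⟨(le_div_iff₀ hcpos).mpr (by linarith [mul_comm (α s a) (confKer Pu pib T s a s')]),
          (div_le_iff₀ hcpos).mpr (by linarith [mul_comm (β s a) (confKer Pu pib T s a s')])⟩
    · have hkey : ∀ s', piMarg Pu pib s a * (w s' / piMarg Pu pib s a) * confKer Pu pib T s a s'
          = margKer Pu T s a s' := by
        intro s'
        rw [hpmw]
        by_cases hc : confKer Pu pib T s a s' = 0
        · have hmz : margKer Pu T s a s' = 0 := by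
            obtain ⟨h1, h2⟩ := marg_sandwich hPu0 hPu1 hT0 hpib0 hsens s a s'
            have h0 := margKer_nonneg hPu0 hT0 s a s'
            rw [hc, mul_zero] at h2
            linarith
          rw [hc, mul_zero, hmz]
        · simp only [hw, hc, if_false]
          exact div_mul_cancel₀ _ hc
      rw [Finset.sum_congr rfl (fun s' _ => hkey s'), margKer_sum hPu1 hT1]
  · intro s'
    have hpmw : piMarg Pu pib s a * (w s' / piMarg Pu pib s a) = w s' := by field_simp
    rw [hpmw]
    by_cases hc : confKer Pu pib T s a s' = 0
    · have hmz : margKer Pu T s a s' = 0 := by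
        obtain ⟨h1, h2⟩ := marg_sandwich hPu0 hPu1 hT0 hpib0 hsens s a s'
        have h0 := margKer_nonneg hPu0 hT0 s a s'
        rw [hc, mul_zero] at h2
        linarith
      rw [hc, zero_mul, hmz]
    · simp only [hw, hc, if_false]
      rw [mul_div_assoc']
      exact mul_div_cancel_left₀ _ hc

lemma cfqe_nonneg
    (hPu0 : ∀ s u, 0 ≤ Pu s u) (hPu1 : ∀ s, ∑ u, Pu s u = 1)
    (hT0 : ∀ s u a s', 0 ≤ T s u a s') (hT1 : ∀ s u a, ∑ s', T s u a s' = 1)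
    (hr0 : ∀ s a, 0 ≤ r s a) (hpib0 : ∀ s u a, 0 < pib s u a)
    (hpie0 : ∀ s a, 0 ≤ pie s a)
    (hαpos : ∀ s a, 0 < α s a)
    (hsens : ∀ s u a, α s a ≤ piMarg Pu pib s a / pib s u a ∧
      piMarg Pu pib s a / pib s u a ≤ β s a) :
    ∀ k s a, 0 ≤ cfqeAux Pu pib T α β r pie k s a := by
  intro k
  induction k with
  | zero => intro s a; simp [cfqeAux]
  | succ n ih =>
    intro s a
    obtain ⟨g0, hg0, _⟩ := Bset_witness hPu0 hPu1 hT0 hT1 hpib0 hsens s a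
    apply le_csInf ⟨_, Set.mem_image_of_mem _ hg0⟩
    rintro b ⟨g, hg, rfl⟩
    apply Finset.sum_nonneg
    intro s' _
    have h1 := confKer_nonneg hPu0 hPu1 hT0 hpib0 s a s'
    have h2 : 0 ≤ piMarg Pu pib s a * g s' := le_trans (hαpos s a).le (hg.1 s').1
    have h3 : 0 ≤ r s a + ∑ a', pie s' a' * cfqeAux Pu pib T α β r pie n s' a' := by
      have := Finset.sum_nonneg (fun a' (_ : a' ∈ Finset.univ) =>
        mul_nonneg (hpie0 s' a') (ih s' a'))
      have := hr0 s a
      linarith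
    positivity

end CFQEAux3

section CFQEAux4
set_option linter.unusedSectionVars false

variable [Fintype S] [Fintype U] [Fintype A] [Nonempty S] [Nonempty U] [Nonempty A]
variable {Pu : S → U → ℝ} {pib : S → U → A → ℝ} {T : S → U → A → S → ℝ}
  {r : S → A → ℝ} {pie : S → A → ℝ} {α β : S → A → ℝ}

lemma Icc_pow_sum (x : ℝ) (k : ℕ) :
    ∑ i ∈ Finset.Icc 1 (k + 1), x ^ i = x * (1 + ∑ i ∈ Finset.Icc 1 k, x ^ i) := by
  induction k with
  | zero => simp
  | succ n ih =>
    rw [Finset.sum_Icc_succ_top (by omega : 1 ≤ n + 1)] at ih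
    rw [Finset.sum_Icc_succ_top (by omega : 1 ≤ n + 1 + 1),
      Finset.sum_Icc_succ_top (by omega : 1 ≤ n + 1)]
    linear_combination ih

lemma cfqe_main
    (hPu0 : ∀ s u, 0 ≤ Pu s u) (hPu1 : ∀ s, ∑ u, Pu s u = 1)
    (hT0 : ∀ s u a s', 0 ≤ T s u a s') (hT1 : ∀ s u a, ∑ s', T s u a s' = 1)
    (hr0 : ∀ s a, 0 ≤ r s a) (hr1 : ∀ s a, r s a ≤ 1)
    (hpib0 : ∀ s u a, 0 < pib s u a)
    (hpie0 : ∀ s a, 0 ≤ pie s a) (hpie1 : ∀ s, ∑ a, pie s a = 1)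
    (hαpos : ∀ s a, 0 < α s a)
    (hsens : ∀ s u a, α s a ≤ piMarg Pu pib s a / pib s u a ∧
      piMarg Pu pib s a / pib s u a ≤ β s a)
    (am bm : ℝ) (ham : 0 < am)
    (hamα : ∀ s a, am ≤ α s a) (hβbm : ∀ s a, β s a ≤ bm) :
    ∀ k s a,
      cfqeAux Pu pib T α β r pie (k + 1) s a ≤ Qaux (margKer Pu T) r pie k s a ∧
        Qaux (margKer Pu T) r pie k s a - cfqeAux Pu pib T α β r pie (k + 1) s a ≤
          (k : ℝ) - ∑ i ∈ Finset.Icc 1 k, (am / bm) ^ i := by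
  have hbm : 0 < bm := by
    obtain ⟨s, a⟩ : Nonempty (S × A) := inferInstance
    exact lt_of_lt_of_le (hαpos s a) (le_trans (alpha_le_beta hsens s a) (hβbm s a))
  have hρ0 : 0 < am / bm := div_pos ham hbm
  have hρ1 : am / bm ≤ 1 := by
    rw [div_le_one hbm]
    obtain ⟨s, a⟩ : Nonempty (S × A) := inferInstance
    exact le_trans (hamα s a) (le_trans (alpha_le_beta hsens s a) (hβbm s a))
  set ρ : ℝ := am / bm with hρ
  intro k
  induction k with
  | zero =>
    intro s a
    -- cfqe 1 = r, Qaux 0 = r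
    have hQ : Qaux (margKer Pu T) r pie 0 s a = r s a := by
      simp [Qaux, Vaux]
    have himg : (fun g : S → ℝ =>
        ∑ s', confKer Pu pib T s a s' * (piMarg Pu pib s a * g s') *
          (r s a + ∑ a', pie s' a' * cfqeAux Pu pib T α β r pie 0 s' a')) ''
        Bset Pu pib T α β s a = {r s a} := by
      apply Set.eq_singleton_iff_nonempty_unique_mem.mpr
      constructor
      · obtain ⟨g0, hg0, _⟩ := Bset_witness hPu0 hPu1 hT0 hT1 hpib0 hsens s a
        exact ⟨_, Set.mem_image_of_mem _ hg0⟩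
      · rintro x ⟨g, hg, rfl⟩
        show ∑ s', confKer Pu pib T s a s' * (piMarg Pu pib s a * g s') *
            (r s a + ∑ a', pie s' a' * cfqeAux Pu pib T α β r pie 0 s' a') = r s a
        have hz : ∀ (s' : S) (a' : A), cfqeAux Pu pib T α β r pie 0 s' a' = 0 :=
          fun _ _ => rfl
        have heq : ∀ s', confKer Pu pib T s a s' * (piMarg Pu pib s a * g s') *
            (r s a + ∑ a', pie s' a' * cfqeAux Pu pib T α β r pie 0 s' a')
            = piMarg Pu pib s a * g s' * confKer Pu pib T s a s' * r s a := by
          intro s'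
          simp only [hz, mul_zero, Finset.sum_const_zero, add_zero]
          ring
        rw [Finset.sum_congr rfl (fun s' _ => heq s'), ← Finset.sum_mul, hg.2, one_mul]
    have : cfqeAux Pu pib T α β r pie 1 s a = r s a := by
      show sInf _ = r s a
      rw [himg, csInf_singleton]
    rw [this, hQ]
    simp
  | succ k ih =>
    intro s a
    -- notation
    set c : S → ℝ := fun s' => ∑ a', pie s' a' * cfqeAux Pu pib T α β r pie (k + 1) s' a'
      with hc
    set v : S → ℝ := fun s' => ∑ a', pie s' a' * Qaux (margKer Pu T) r pie k s' a' with hv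
    set D : ℝ := (k : ℝ) - ∑ i ∈ Finset.Icc 1 k, ρ ^ i with hD
    have hc0 : ∀ s', 0 ≤ c s' := fun s' =>
      Finset.sum_nonneg fun a' _ => mul_nonneg (hpie0 s' a')
        (cfqe_nonneg hPu0 hPu1 hT0 hT1 hr0 hpib0 hpie0 hαpos hsens (k + 1) s' a')
    have hcv : ∀ s', c s' ≤ v s' := fun s' =>
      Finset.sum_le_sum fun a' _ =>
        mul_le_mul_of_nonneg_left (ih s' a').1 (hpie0 s' a')
    have hvD : ∀ s', v s' - D ≤ c s' := by
      intro s'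
      have h1 : ∀ a', pie s' a' * Qaux (margKer Pu T) r pie k s' a' - pie s' a' * D
          ≤ pie s' a' * cfqeAux Pu pib T α β r pie (k + 1) s' a' := by
        intro a'
        have := mul_le_mul_of_nonneg_left (ih s' a').2 (hpie0 s' a')
        nlinarith [hpie0 s' a']
      calc v s' - D = ∑ a', (pie s' a' * Qaux (margKer Pu T) r pie k s' a' - pie s' a' * D) := by
            rw [Finset.sum_sub_distrib, ← Finset.sum_mul, hpie1 s', one_mul]
        _ ≤ c s' := Finset.sum_le_sum fun a' _ => h1 a'
    have hvk : ∀ s', v s' ≤ (k : ℝ) + 1 := by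
      intro s'
      calc v s' ≤ ∑ a', pie s' a' * ((k : ℝ) + 1) :=
            Finset.sum_le_sum fun a' _ => mul_le_mul_of_nonneg_left
              (Qaux_bounds hPu0 hPu1 hT0 hT1 hr0 hr1 hpie0 hpie1 k s' a').2 (hpie0 s' a')
        _ = (k : ℝ) + 1 := by rw [← Finset.sum_mul, hpie1, one_mul]
    have hQ : Qaux (margKer Pu T) r pie (k + 1) s a
        = r s a + ∑ s', margKer Pu T s a s' * v s' := by
      unfold Qaux
      congr 1
    have hD0 : 0 ≤ D := by
      have h1 : ∑ i ∈ Finset.Icc 1 k, ρ ^ i ≤ ∑ i ∈ Finset.Icc 1 k, (1 : ℝ) :=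
        Finset.sum_le_sum fun i _ => pow_le_one₀ hρ0.le hρ1
      have h2 : ∑ i ∈ Finset.Icc 1 k, (1 : ℝ) = (k : ℝ) := by
        rw [Finset.sum_const, Nat.card_Icc, Nat.add_sub_cancel, nsmul_eq_mul, mul_one]
      rw [hD]
      linarith
    -- the function whose infimum is taken
    set F : (S → ℝ) → ℝ := fun g =>
      ∑ s', confKer Pu pib T s a s' * (piMarg Pu pib s a * g s') * (r s a + c s') with hF
    have hcfqe : cfqeAux Pu pib T α β r pie (k + 2) s a
        = sInf (F '' Bset Pu pib T α β s a) := rfl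
    obtain ⟨g0, hg0, hg0id⟩ := Bset_witness hPu0 hPu1 hT0 hT1 hpib0 hsens s a
    -- every value of F on Bset is ≥ the claimed lower bound
    have hlow : ∀ g ∈ Bset Pu pib T α β s a,
        Qaux (margKer Pu T) r pie (k + 1) s a - ((1 - ρ) * ((k : ℝ) + 1) + ρ * D) ≤ F g := by
      intro g hg
      have hwsum : ∑ s', confKer Pu pib T s a s' * (piMarg Pu pib s a * g s') = 1 := by
        rw [← hg.2]
        exact Finset.sum_congr rfl fun s' _ => by ring
      have key1 : ∀ s', ρ * margKer Pu T s a s'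
          ≤ confKer Pu pib T s a s' * (piMarg Pu pib s a * g s') := by
        intro s'
        have hconf := confKer_nonneg hPu0 hPu1 hT0 hpib0 s a s'
        have h1 : margKer Pu T s a s' ≤ bm * confKer Pu pib T s a s' :=
          le_trans (marg_sandwich hPu0 hPu1 hT0 hpib0 hsens s a s').2
            (mul_le_mul_of_nonneg_right (hβbm s a) hconf)
        have h2 : am ≤ piMarg Pu pib s a * g s' := le_trans (hamα s a) ((hg.1 s').1)
        rw [hρ, div_mul_eq_mul_div, div_le_iff₀ hbm]
        nlinarith [mul_le_mul_of_nonneg_left h1 ham.le,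
          mul_le_mul_of_nonneg_left h2 hconf]
      have hFsplit : F g = r s a
          + ∑ s', confKer Pu pib T s a s' * (piMarg Pu pib s a * g s') * c s' := by
        simp only [hF]
        have hsp : ∀ s', confKer Pu pib T s a s' * (piMarg Pu pib s a * g s') * (r s a + c s')
            = confKer Pu pib T s a s' * (piMarg Pu pib s a * g s') * r s a
              + confKer Pu pib T s a s' * (piMarg Pu pib s a * g s') * c s' := by
          intro s'; ring
        rw [Finset.sum_congr rfl (fun s' _ => hsp s'), Finset.sum_add_distrib,
          ← Finset.sum_mul, hwsum, one_mul]
      have hstep1 : ∑ s', ρ * margKer Pu T s a s' * c s'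
          ≤ ∑ s', confKer Pu pib T s a s' * (piMarg Pu pib s a * g s') * c s' :=
        Finset.sum_le_sum fun s' _ => mul_le_mul_of_nonneg_right (key1 s') (hc0 s')
      have hstep2 : ∑ s', ρ * margKer Pu T s a s' * (v s' - D)
          ≤ ∑ s', ρ * margKer Pu T s a s' * c s' :=
        Finset.sum_le_sum fun s' _ => mul_le_mul_of_nonneg_left (hvD s')
          (mul_nonneg hρ0.le (margKer_nonneg hPu0 hT0 s a s'))
      have hstep3 : ∑ s', ρ * margKer Pu T s a s' * (v s' - D)
          = ρ * (∑ s', margKer Pu T s a s' * v s') - ρ * D := by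
        have hsp : ∀ s', ρ * margKer Pu T s a s' * (v s' - D)
            = ρ * (margKer Pu T s a s' * v s') - ρ * D * margKer Pu T s a s' := by
          intro s'; ring
        rw [Finset.sum_congr rfl (fun s' _ => hsp s'), Finset.sum_sub_distrib,
          ← Finset.mul_sum, ← Finset.mul_sum, margKer_sum hPu1 hT1, mul_one]
      have hmv1 : ∑ s', margKer Pu T s a s' * v s' ≤ (k : ℝ) + 1 := by
        calc ∑ s', margKer Pu T s a s' * v s'
            ≤ ∑ s', margKer Pu T s a s' * ((k : ℝ) + 1) :=
              Finset.sum_le_sum fun s' _ => mul_le_mul_of_nonneg_left (hvk s')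
                (margKer_nonneg hPu0 hT0 s a s')
          _ = (k : ℝ) + 1 := by rw [← Finset.sum_mul, margKer_sum hPu1 hT1, one_mul]
      have hfinal := mul_le_mul_of_nonneg_left hmv1 (by linarith : (0:ℝ) ≤ 1 - ρ)
      rw [hQ, hFsplit]
      nlinarith [hstep1, hstep2, hstep3]
    have hbdd : BddBelow (F '' Bset Pu pib T α β s a) := by
      refine ⟨Qaux (margKer Pu T) r pie (k + 1) s a - ((1 - ρ) * ((k : ℝ) + 1) + ρ * D), ?_⟩
      rintro x ⟨g, hg, rfl⟩
      exact hlow g hg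
    have hne : (F '' Bset Pu pib T α β s a).Nonempty :=
      ⟨F g0, Set.mem_image_of_mem _ hg0⟩
    have hFg0 : F g0 = r s a + ∑ s', margKer Pu T s a s' * c s' := by
      simp only [hF]
      have hsp : ∀ s', confKer Pu pib T s a s' * (piMarg Pu pib s a * g0 s') * (r s a + c s')
          = margKer Pu T s a s' * r s a + margKer Pu T s a s' * c s' := by
        intro s'; rw [hg0id s']; ring
      rw [Finset.sum_congr rfl (fun s' _ => hsp s'), Finset.sum_add_distrib,
        ← Finset.sum_mul, margKer_sum hPu1 hT1, one_mul]
    have hFg0le : F g0 ≤ Qaux (margKer Pu T) r pie (k + 1) s a := by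
      rw [hFg0, hQ]
      have : ∑ s', margKer Pu T s a s' * c s' ≤ ∑ s', margKer Pu T s a s' * v s' :=
        Finset.sum_le_sum fun s' _ => mul_le_mul_of_nonneg_left (hcv s')
          (margKer_nonneg hPu0 hT0 s a s')
      linarith
    have hub : cfqeAux Pu pib T α β r pie (k + 2) s a
        ≤ Qaux (margKer Pu T) r pie (k + 1) s a := by
      rw [hcfqe]
      exact le_trans (csInf_le hbdd (Set.mem_image_of_mem _ hg0)) hFg0le
    have hlb : Qaux (margKer Pu T) r pie (k + 1) s a - ((1 - ρ) * ((k : ℝ) + 1) + ρ * D)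
        ≤ cfqeAux Pu pib T α β r pie (k + 2) s a := by
      rw [hcfqe]
      apply le_csInf hne
      rintro x ⟨g, hg, rfl⟩
      exact hlow g hg
    have harith : (1 - ρ) * ((k : ℝ) + 1) + ρ * D
        = ((k + 1 : ℕ) : ℝ) - ∑ i ∈ Finset.Icc 1 (k + 1), ρ ^ i := by
      rw [Icc_pow_sum ρ k, hD]
      push_cast
      ring
    refine ⟨hub, ?_⟩
    rw [← harith]
    linarith

end CFQEAux4

/-- The infinite-data CFQE iterates are valid lower bounds on the true Q-function with
worst-case error `(H−h) − Σ_{i=1}^{H−h} (α_min/β_max)^i`; in particular for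
`α = 1/(1+ε)`, `β = 1+ε` one gets `0 ≤ V_1(s) − Σ_a π_e(a|s) f̂_1(s,a) ≤ 2εH²`. -/
theorem cfqe_error_bounds
    [Fintype S] [Fintype U] [Fintype A] [Nonempty S] [Nonempty U] [Nonempty A]
    (H : ℕ) (hH : 1 ≤ H)
    (Pu : S → U → ℝ) (hPu0 : ∀ s u, 0 ≤ Pu s u) (hPu1 : ∀ s, ∑ u, Pu s u = 1)
    (T : S → U → A → S → ℝ) (hT0 : ∀ s u a s', 0 ≤ T s u a s')
    (hT1 : ∀ s u a, ∑ s', T s u a s' = 1)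
    (r : S → A → ℝ) (hr0 : ∀ s a, 0 ≤ r s a) (hr1 : ∀ s a, r s a ≤ 1)
    (pib : S → U → A → ℝ) (hpib0 : ∀ s u a, 0 < pib s u a)
    (hpib1 : ∀ s u, ∑ a, pib s u a = 1)
    (pie : S → A → ℝ) (hpie0 : ∀ s a, 0 ≤ pie s a) (hpie1 : ∀ s, ∑ a, pie s a = 1)
    (α β : S → A → ℝ) (hαpos : ∀ s a, 0 < α s a)
    (hsens : ∀ s u a, α s a ≤ piMarg Pu pib s a / pib s u a ∧
      piMarg Pu pib s a / pib s u a ≤ β s a)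
    (αmin βmax : ℝ) (hαmin0 : 0 < αmin)
    (hαmin : ∀ s a, αmin ≤ α s a) (hβmax : ∀ s a, β s a ≤ βmax) :
    (∀ h : ℕ, 1 ≤ h → h ≤ H → ∀ s a,
      0 ≤ Qaux (margKer Pu T) r pie (H - h) s a -
            cfqeAux Pu pib T α β r pie (H + 1 - h) s a ∧
        Qaux (margKer Pu T) r pie (H - h) s a -
            cfqeAux Pu pib T α β r pie (H + 1 - h) s a ≤
          ((H - h : ℕ) : ℝ) - ∑ i ∈ Icc 1 (H - h), (αmin / βmax) ^ i) ∧
    (∀ ε : ℝ, 0 < ε → (∀ s a, α s a = 1 / (1 + ε)) → (∀ s a, β s a = 1 + ε) →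
      ∀ s : S,
        0 ≤ Vaux (margKer Pu T) r pie H s -
              ∑ a, pie s a * cfqeAux Pu pib T α β r pie H s a ∧
          Vaux (margKer Pu T) r pie H s -
              ∑ a, pie s a * cfqeAux Pu pib T α β r pie H s a ≤
            2 * ε * H ^ 2) := by
  have main := cfqe_main hPu0 hPu1 hT0 hT1 hr0 hr1 hpib0 hpie0 hpie1 hαpos hsens
  constructor
  · intro h h1 hhH s a
    have hk : H + 1 - h = (H - h) + 1 := by omega
    rw [hk]
    obtain ⟨hub, hlb⟩ := main αmin βmax hαmin0 hαmin hβmax (H - h) s a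
    exact ⟨by linarith, hlb⟩
  · intro ε hε hαe hβe s
    have h1e : (0:ℝ) < 1 + ε := by linarith
    have h1e2 : (0:ℝ) < (1 + ε) * (1 + ε) := by positivity
    set m := H - 1 with hm
    have hH1 : H = m + 1 := by omega
    have hmain := main (1 / (1 + ε)) (1 + ε) (by positivity)
      (fun s a => (hαe s a).ge) (fun s a => (hβe s a).le) m
    set ρ : ℝ := 1 / (1 + ε) / (1 + ε) with hρ
    have hρval : ρ = 1 / ((1 + ε) * (1 + ε)) := by rw [hρ, div_div]
    have hρ0 : 0 < ρ := by rw [hρval]; positivity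
    have hρ1 : ρ ≤ 1 := by rw [hρval, div_le_one h1e2]; nlinarith
    have h2ε : 1 - ρ ≤ 2 * ε := by
      have h2 : 1 - 2 * ε ≤ 1 / ((1 + ε) * (1 + ε)) := by
        rw [le_div_iff₀ h1e2]
        nlinarith [hε.le, sq_nonneg ε, mul_nonneg (mul_nonneg hε.le hε.le) hε.le]
      rw [hρval]; linarith
    have hV : Vaux (margKer Pu T) r pie H s
        = ∑ a, pie s a * Qaux (margKer Pu T) r pie m s a := by
      rw [hH1, Vaux_succ]
    have hdiff : Vaux (margKer Pu T) r pie H s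
        - ∑ a, pie s a * cfqeAux Pu pib T α β r pie H s a
        = ∑ a, pie s a * (Qaux (margKer Pu T) r pie m s a
            - cfqeAux Pu pib T α β r pie (m + 1) s a) := by
      rw [hV, hH1, ← Finset.sum_sub_distrib]
      exact Finset.sum_congr rfl fun a _ => by ring
    have hcard : ∑ i ∈ Finset.Icc 1 m, (1:ℝ) = (m : ℝ) := by
      rw [Finset.sum_const, Nat.card_Icc, Nat.add_sub_cancel, nsmul_eq_mul, mul_one]
    have hmH : (m : ℝ) ≤ (H : ℝ) := Nat.cast_le.mpr (Nat.sub_le H 1)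
    have hDb : (m : ℝ) - ∑ i ∈ Finset.Icc 1 m, ρ ^ i ≤ 2 * ε * (H : ℝ) ^ 2 := by
      have hterm : ∀ i ∈ Finset.Icc 1 m, 1 - ρ ^ i ≤ (m : ℝ) * (2 * ε) := by
        intro i hi
        have hiℝ : (i : ℝ) ≤ (m : ℝ) := Nat.cast_le.mpr (Finset.mem_Icc.mp hi).2
        have hbern := one_add_mul_le_pow (by nlinarith : (-2:ℝ) ≤ ρ - 1) i
        have hone : (1:ℝ) + (ρ - 1) = ρ := by ring
        rw [hone] at hbern
        have hp1 : (i : ℝ) * (1 - ρ) ≤ (i : ℝ) * (2 * ε) :=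
          mul_le_mul_of_nonneg_left h2ε (Nat.cast_nonneg i)
        have hp2 : (i : ℝ) * (2 * ε) ≤ (m : ℝ) * (2 * ε) :=
          mul_le_mul_of_nonneg_right hiℝ (by positivity)
        nlinarith
      calc (m : ℝ) - ∑ i ∈ Finset.Icc 1 m, ρ ^ i
          = ∑ i ∈ Finset.Icc 1 m, (1 - ρ ^ i) := by
            rw [Finset.sum_sub_distrib, hcard]
        _ ≤ ∑ i ∈ Finset.Icc 1 m, (m : ℝ) * (2 * ε) := Finset.sum_le_sum hterm
        _ = (m : ℝ) * ((m : ℝ) * (2 * ε)) := by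
            rw [Finset.sum_const, Nat.card_Icc, Nat.add_sub_cancel, nsmul_eq_mul]
        _ ≤ 2 * ε * (H : ℝ) ^ 2 := by
            have hsq : (m : ℝ) * (m : ℝ) ≤ (H : ℝ) * (H : ℝ) :=
              mul_le_mul hmH hmH (Nat.cast_nonneg m) (Nat.cast_nonneg H)
            nlinarith [hsq, hε.le]
    constructor
    · rw [hdiff]
      apply Finset.sum_nonneg
      intro a _
      exact mul_nonneg (hpie0 s a) (by linarith [(hmain s a).1])
    · rw [hdiff]
      calc ∑ a, pie s a * (Qaux (margKer Pu T) r pie m s a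
              - cfqeAux Pu pib T α β r pie (m + 1) s a)
          ≤ ∑ a, pie s a * ((m : ℝ) - ∑ i ∈ Finset.Icc 1 m, ρ ^ i) :=
            Finset.sum_le_sum fun a _ =>
              mul_le_mul_of_nonneg_left (hmain s a).2 (hpie0 s a)
        _ = (m : ℝ) - ∑ i ∈ Finset.Icc 1 m, ρ ^ i := by
            rw [← Finset.sum_mul, hpie1, one_mul]
        _ ≤ 2 * ε * (H : ℝ) ^ 2 := hDb
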